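/- Let f be a strictly concave differentiable function on [m,M] with m < M, μ_f = (f(M)-f(m))/(M-m), ν_f = (Mf(m)-mf(M))/(M-m), and γ_f = max_{m ≤ t ≤ M} f(t)/(μ_f t + ν_f), assuming μ_f t + ν_f > 0 on [m,M]. Then for every unital positive linear map Φ and every self-adjoint operator A with spectrum in [m,M]: γ_f·Φ(f(A)) ≥ f(Φ(A)). -/

import Mathlib

lemma cfc_line_eq {𝒜 : Type*} [CStarAlgebra 𝒜] [PartialOrder 𝒜] [StarOrderedRing 𝒜]
    (μ ν : ℝ) (a : 𝒜) (ha : IsSelfAdjoint a) :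
    cfc (fun t : ℝ => μ * t + ν) a = μ • a + algebraMap ℝ 𝒜 ν := by
  rw [cfc_add (a := a) (fun t : ℝ => μ * t) (fun _ => ν), cfc_const_mul μ _ a, cfc_id' ℝ a,
    cfc_const ν a]

/-- Mond–Pečarić ratio-type reverse of the Choi–Davis–Jensen inequality:
`f (Φ A) ≤ γ_f • Φ (f A)` for a strictly concave differentiable `f` on `[m, M]`. -/
theorem reverse_choi_davis_jensen_ratio
    {𝒜 ℬ : Type*} [CStarAlgebra 𝒜] [PartialOrder 𝒜] [StarOrderedRing 𝒜]
    [CStarAlgebra ℬ] [PartialOrder ℬ] [StarOrderedRing ℬ]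
    (m M : ℝ) (hmM : m < M) (f : ℝ → ℝ)
    (hf_diff : ∀ t ∈ Set.Icc m M, DifferentiableAt ℝ f t)
    (hf_concave : StrictConcaveOn ℝ (Set.Icc m M) f)
    (hpos : ∀ t ∈ Set.Icc m M, 0 < (f M - f m) / (M - m) * t + (M * f m - m * f M) / (M - m))
    (γ : ℝ)
    (hγ : IsGreatest ((fun t => f t /
        ((f M - f m) / (M - m) * t + (M * f m - m * f M) / (M - m))) '' Set.Icc m M) γ)
    (Φ : 𝒜 →ₗ[ℂ] ℬ) (hΦ1 : Φ 1 = 1) (hΦpos : ∀ a : 𝒜, 0 ≤ a → 0 ≤ Φ a)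
    (A : 𝒜) (hA : IsSelfAdjoint A) (hspec : spectrum ℝ A ⊆ Set.Icc m M) :
    cfc f (Φ A) ≤ γ • Φ (cfc f A) := by
  set μ : ℝ := (f M - f m) / (M - m) with hμ
  set ν : ℝ := (M * f m - m * f M) / (M - m) with hν
  have hMm : (0:ℝ) < M - m := sub_pos.2 hmM
  have hne : M - m ≠ 0 := hMm.ne'
  have hcont : ContinuousOn f (Set.Icc m M) := fun t ht =>
    (hf_diff t ht).continuousAt.continuousWithinAt
  -- line below f on [m,M]
  have hgf : ∀ t ∈ Set.Icc m M, μ * t + ν ≤ f t := by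
    intro t ht
    have ha : (0:ℝ) ≤ (M - t) / (M - m) := div_nonneg (by linarith [ht.2]) hMm.le
    have hb : (0:ℝ) ≤ (t - m) / (M - m) := div_nonneg (by linarith [ht.1]) hMm.le
    have hab : (M - t) / (M - m) + (t - m) / (M - m) = 1 := by
      field_simp
      ring
    have key := hf_concave.concaveOn.2 (Set.left_mem_Icc.2 hmM.le)
      (Set.right_mem_Icc.2 hmM.le) ha hb hab
    simp only [smul_eq_mul] at key
    have hxy : (M - t) / (M - m) * m + (t - m) / (M - m) * M = t := by
      field_simp
      ring
    rw [hxy] at key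
    have hline : μ * t + ν = (M - t) / (M - m) * f m + (t - m) / (M - m) * f M := by
      rw [hμ, hν]
      field_simp
      ring
    linarith [key]
  -- f below γ * line on [m,M]
  have hfγ : ∀ t ∈ Set.Icc m M, f t ≤ γ * (μ * t + ν) := fun t ht =>
    (div_le_iff₀ (hpos t ht)).1 (hγ.2 ⟨t, ht, rfl⟩)
  -- γ nonneg
  have hγ0 : 0 ≤ γ := by
    obtain ⟨t0, ht0, heq⟩ := hγ.1
    have h1 := hpos t0 ht0
    have h3 : 0 < f t0 := lt_of_lt_of_le h1 (hgf t0 ht0)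
    simp only at heq
    rw [← heq]
    exact (div_pos h3 h1).le
  -- Φ is monotone
  have hΦmono : ∀ a b : 𝒜, a ≤ b → Φ a ≤ Φ b := by
    intro a b hab
    have h := hΦpos (b - a) (sub_nonneg.2 hab)
    rw [map_sub] at h
    exact sub_nonneg.1 h
  -- spectrum bounds give operator bounds for A
  have hA1 : algebraMap ℝ 𝒜 m ≤ A :=
    (algebraMap_le_iff_le_spectrum hA).2 fun x hx => (hspec hx).1
  have hA2 : A ≤ algebraMap ℝ 𝒜 M :=
    (le_algebraMap_iff_spectrum_le hA).2 fun x hx => (hspec hx).2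
  -- Φ maps real algebraMap to algebraMap
  have hΦalg : ∀ r : ℝ, Φ (algebraMap ℝ 𝒜 r) = algebraMap ℝ ℬ r := by
    intro r
    rw [Algebra.algebraMap_eq_smul_one, Algebra.algebraMap_eq_smul_one,
      Φ.map_smul_of_tower, hΦ1]
  -- Φ A is selfadjoint
  have hΦA_nonneg : (0 : ℬ) ≤ Φ (A - algebraMap ℝ 𝒜 m) :=
    hΦpos _ (sub_nonneg.2 hA1)
  have hΦA_sa : IsSelfAdjoint (Φ A) := by
    have h1 : IsSelfAdjoint (Φ (A - algebraMap ℝ 𝒜 m)) := .of_nonneg hΦA_nonneg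
    rw [map_sub, hΦalg] at h1
    have h2 : IsSelfAdjoint (algebraMap ℝ ℬ m) := .algebraMap ℬ (IsSelfAdjoint.all m)
    simpa using h1.add h2
  -- bounds for Φ A
  have hB1 : algebraMap ℝ ℬ m ≤ Φ A := by
    have := hΦmono _ _ hA1; rwa [hΦalg] at this
  have hB2 : Φ A ≤ algebraMap ℝ ℬ M := by
    have := hΦmono _ _ hA2; rwa [hΦalg] at this
  have hspecB : spectrum ℝ (Φ A) ⊆ Set.Icc m M := fun x hx =>
    ⟨(algebraMap_le_iff_le_spectrum hΦA_sa).1 hB1 x hx,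
     (le_algebraMap_iff_spectrum_le hΦA_sa).1 hB2 x hx⟩
  -- step 1: line(A) ≤ f(A)
  have step1 : cfc (fun t : ℝ => μ * t + ν) A ≤ cfc f A := by
    exact cfc_mono (fun x hx => hgf x (hspec hx)) (by fun_prop) (hcont.mono hspec)
  rw [cfc_line_eq μ ν A hA] at step1
  -- step 2: apply Φ
  have step2 : μ • Φ A + algebraMap ℝ ℬ ν ≤ Φ (cfc f A) := by
    have := hΦmono _ _ step1
    rwa [map_add, Φ.map_smul_of_tower, hΦalg] at this
  -- step 3: f(Φ A) ≤ γ • line(Φ A)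
  have step3 : cfc f (Φ A) ≤ cfc (fun t : ℝ => γ * (μ * t + ν)) (Φ A) := by
    exact cfc_mono (fun x hx => hfγ x (hspecB hx)) (hcont.mono hspecB) (by fun_prop)
  have hline2 : cfc (fun t : ℝ => γ * (μ * t + ν)) (Φ A)
      = γ • (μ • Φ A + algebraMap ℝ ℬ ν) := by
    rw [cfc_const_mul γ _ (Φ A), cfc_line_eq μ ν (Φ A) hΦA_sa]
  calc cfc f (Φ A) ≤ γ • (μ • Φ A + algebraMap ℝ ℬ ν) := hline2 ▸ step3
    _ ≤ γ • Φ (cfc f A) := smul_le_smul_of_nonneg_left step2 hγ0
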